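/- arXiv:1606.00478 — 4 statements merged into one kernel-verified Lean document; each statement's English description precedes it below -/
import Mathlib

section
/- Let W and Z be independent nonnegative real-valued random variables on a probability space. Then E[ln(1 + W/(1 + Z))] = ∫₀^∞ (e^{−z}/z) · E[e^{−z·Z}] · (1 − E[e^{−z·W}]) dz, where both sides are interpreted as Lebesgue integrals with values in [0, ∞]. -/
open MeasureTheory Real Set

-- ∫ z in Ioi 0, exp(-(z*t)) = 1/t for t > 0
lemma aux_exp_int {t : ℝ} (ht : 0 < t) :
    ∫ z in Ioi (0:ℝ), Real.exp (-(z * t)) = 1 / t := by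
  have h := integral_comp_mul_right_Ioi (fun x => Real.exp (-x)) 0 ht
  simp only [zero_mul, integral_exp_neg_Ioi, neg_zero, Real.exp_zero, smul_eq_mul, mul_one] at h
  rw [show (fun z => Real.exp (-(z * t))) = (fun z => Real.exp (-(z * t))) from rfl]
  simpa [one_div] using h

-- integrability
lemma aux_exp_intble {t : ℝ} (ht : 0 < t) :
    IntegrableOn (fun z => Real.exp (-(z * t))) (Ioi (0:ℝ)) := by
  have := exp_neg_integrableOn_Ioi 0 ht
  simpa [neg_mul, mul_comm] using this

lemma aux_lint_exp {t : ℝ} (ht : 0 < t) :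
    ∫⁻ z in Ioi (0:ℝ), ENNReal.ofReal (Real.exp (-(z * t))) = ENNReal.ofReal (1 / t) := by
  rw [← ofReal_integral_eq_lintegral_ofReal (aux_exp_intble ht)
    (Filter.Eventually.of_forall fun x => (Real.exp_pos _).le), aux_exp_int ht]

lemma aux_ioc_int {z a b : ℝ} (hz : 0 < z) (hab : a ≤ b) :
    ∫ t in Ioc a b, Real.exp (-(z * t)) =
      (Real.exp (-(z * a)) - Real.exp (-(z * b))) / z := by
  rw [← intervalIntegral.integral_of_le hab]
  have h1 : ∀ t : ℝ, Real.exp (-(z * t)) = Real.exp ((-z) * t) := by intro t; ring_nf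
  simp_rw [h1]
  have h2 := intervalIntegral.integral_comp_mul_left (a := a) (b := b)
    (f := fun x => Real.exp x) (neg_ne_zero.mpr hz.ne')
  rw [h2, integral_exp]
  have hz' : z ≠ 0 := hz.ne'
  field_simp
  ring_nf
  rw [mul_comm z (rexp (-(z*b))), mul_comm z (rexp (-(z*a))), mul_assoc, mul_assoc,
    mul_inv_cancel₀ hz', mul_one, mul_one]

lemma aux_ioc_intble {z a b : ℝ} :
    IntegrableOn (fun t => Real.exp (-(z * t))) (Ioc a b) :=
  (Continuous.integrableOn_Ioc (by continuity))

lemma aux_frullani {a b : ℝ} (ha : 1 ≤ a) (hab : a ≤ b) :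
    ∫⁻ z in Ioi (0:ℝ), ENNReal.ofReal ((Real.exp (-(z * a)) - Real.exp (-(z * b))) / z)
      = ENNReal.ofReal (Real.log b - Real.log a) := by
  have ha0 : (0:ℝ) < a := lt_of_lt_of_le one_pos ha
  have hb0 : (0:ℝ) < b := lt_of_lt_of_le ha0 hab
  -- rewrite integrand as inner lintegral
  have key : ∀ z ∈ Ioi (0:ℝ),
      ENNReal.ofReal ((Real.exp (-(z * a)) - Real.exp (-(z * b))) / z)
        = ∫⁻ t in Ioc a b, ENNReal.ofReal (Real.exp (-(z * t))) := by
    intro z hz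
    rw [← ofReal_integral_eq_lintegral_ofReal aux_ioc_intble
      (Filter.Eventually.of_forall fun t => (Real.exp_pos _).le), aux_ioc_int hz hab]
  rw [setLIntegral_congr_fun measurableSet_Ioi key]
  -- Tonelli
  have hmeas : AEMeasurable (Function.uncurry fun (z t : ℝ) => ENNReal.ofReal (Real.exp (-(z * t))))
      ((volume.restrict (Ioi (0:ℝ))).prod (volume.restrict (Ioc a b))) := by
    apply Measurable.aemeasurable
    apply ENNReal.measurable_ofReal.comp
    exact (Real.continuous_exp.comp (continuous_mul.neg)).measurable
  rw [lintegral_lintegral_swap hmeas]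
  have inner : ∀ t ∈ Ioc a b,
      ∫⁻ z in Ioi (0:ℝ), ENNReal.ofReal (Real.exp (-(z * t))) = ENNReal.ofReal (1 / t) := by
    intro t ht
    exact aux_lint_exp (lt_of_lt_of_le ha0 ht.1.le)
  rw [setLIntegral_congr_fun measurableSet_Ioc inner]
  have hint : IntegrableOn (fun t : ℝ => 1 / t) (Ioc a b) := by
    have : IntervalIntegrable (fun t : ℝ => 1 / t) volume a b :=
      intervalIntegral.intervalIntegrable_one_div (fun t ht => by
        rcases Set.mem_uIcc.1 ht with ⟨h1,_⟩|⟨h1,h2⟩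
        · exact (lt_of_lt_of_le ha0 h1).ne'
        · exact (lt_of_lt_of_le ha0 (le_trans hab h1)).ne') (by fun_prop)
    exact (intervalIntegrable_iff_integrableOn_Ioc_of_le hab).mp this
  rw [← ofReal_integral_eq_lintegral_ofReal hint (by
    filter_upwards [ae_restrict_mem measurableSet_Ioc] with t ht
    have : (0:ℝ) < t := lt_of_lt_of_le ha0 ht.1.le
    positivity)]
  rw [← intervalIntegral.integral_of_le hab, integral_one_div (by
    intro h; rcases Set.mem_uIcc.1 h with ⟨h1,_⟩|⟨h1,_⟩
    · exact absurd h1 (not_le.mpr ha0)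
    · exact absurd h1 (not_le.mpr hb0)), Real.log_div hb0.ne' ha0.ne']

lemma aux_pointwise {w v : ℝ} (hw : 0 ≤ w) (hv : 0 ≤ v) :
    ENNReal.ofReal (Real.log (1 + w / (1 + v))) =
      ∫⁻ z in Ioi (0:ℝ), ENNReal.ofReal (Real.exp (-z) / z *
        Real.exp (-(z * v)) * (1 - Real.exp (-(z * w)))) := by
  have hv0 : (0:ℝ) < 1 + v := by linarith
  have hb0 : (0:ℝ) < 1 + v + w := by linarith
  have hptw : ∀ z ∈ Ioi (0:ℝ),
      ENNReal.ofReal (Real.exp (-z) / z * Real.exp (-(z * v)) * (1 - Real.exp (-(z * w)))) =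
      ENNReal.ofReal ((Real.exp (-(z * (1 + v))) - Real.exp (-(z * (1 + v + w)))) / z) := by
    intro z hz
    congr 1
    have h1 : Real.exp (-z) * Real.exp (-(z * v)) = Real.exp (-(z * (1 + v))) := by
      rw [← Real.exp_add]; ring_nf
    have h2 : Real.exp (-(z * (1 + v))) * Real.exp (-(z * w)) = Real.exp (-(z * (1 + v + w))) := by
      rw [← Real.exp_add]; ring_nf
    rw [div_mul_eq_mul_div, div_mul_eq_mul_div, h1, mul_sub, mul_one, h2]
  rw [setLIntegral_congr_fun measurableSet_Ioi hptw,
    aux_frullani (by linarith) (by linarith)]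
  congr 1
  have : 1 + w / (1 + v) = (1 + v + w) / (1 + v) := by field_simp
  rw [this, Real.log_div hb0.ne' hv0.ne']

lemma aux_integrable {Ω : Type*} [MeasurableSpace Ω] (μ : Measure Ω) [IsProbabilityMeasure μ]
    {X : Ω → ℝ} (hX : Measurable X) (hX0 : ∀ ω, 0 ≤ X ω) {z : ℝ} (hz : 0 ≤ z) :
    Integrable (fun ω => Real.exp (-(z * X ω))) μ := by
  refine Integrable.mono' (integrable_const 1)
    ((Real.continuous_exp.measurable.comp ((measurable_const.mul hX).neg)).aestronglyMeasurable) ?_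
  filter_upwards with ω
  rw [Real.norm_eq_abs, abs_of_pos (Real.exp_pos _)]
  exact Real.exp_le_one_iff.mpr (neg_nonpos.mpr (mul_nonneg hz (hX0 ω)))


/-- For independent nonnegative random variables `W` and `Z` on a probability space,
`E[ln(1 + W/(1 + Z))] = ∫₀^∞ (e^{−z}/z) · E[e^{−z·Z}] · (1 − E[e^{−z·W}]) dz`,
both sides as Lebesgue integrals in `[0, ∞]`. -/
theorem expectation_log_rate_eq_lintegral_mgf
    {Ω : Type*} [MeasurableSpace Ω] (μ : Measure Ω) [IsProbabilityMeasure μ]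
    (W Z : Ω → ℝ) (hW : Measurable W) (hZ : Measurable Z)
    (hW0 : ∀ ω, 0 ≤ W ω) (hZ0 : ∀ ω, 0 ≤ Z ω)
    (hInd : ProbabilityTheory.IndepFun W Z μ) :
    ∫⁻ ω, ENNReal.ofReal (Real.log (1 + W ω / (1 + Z ω))) ∂μ =
      ∫⁻ z in Set.Ioi (0 : ℝ), ENNReal.ofReal (Real.exp (-z) / z *
        (∫ ω, Real.exp (-(z * Z ω)) ∂μ) * (1 - ∫ ω, Real.exp (-(z * W ω)) ∂μ)) := by
  have step1 : ∀ ω, ENNReal.ofReal (Real.log (1 + W ω / (1 + Z ω))) =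
      ∫⁻ z in Ioi (0:ℝ), ENNReal.ofReal (Real.exp (-z) / z *
        Real.exp (-(z * Z ω)) * (1 - Real.exp (-(z * W ω)))) :=
    fun ω => aux_pointwise (hW0 ω) (hZ0 ω)
  simp_rw [step1]
  have hmeas : AEMeasurable (Function.uncurry fun (ω : Ω) (z : ℝ) =>
      ENNReal.ofReal (Real.exp (-z) / z * Real.exp (-(z * Z ω)) * (1 - Real.exp (-(z * W ω)))))
      (μ.prod (volume.restrict (Ioi (0:ℝ)))) := by
    apply Measurable.aemeasurable
    apply ENNReal.measurable_ofReal.comp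
    apply Measurable.mul
    apply Measurable.mul
    · exact (Real.continuous_exp.measurable.comp measurable_snd.neg).div measurable_snd
    · exact Real.continuous_exp.measurable.comp (measurable_snd.mul (hZ.comp measurable_fst)).neg
    · exact (measurable_const.sub
        (Real.continuous_exp.measurable.comp (measurable_snd.mul (hW.comp measurable_fst)).neg))
  rw [lintegral_lintegral_swap hmeas]
  apply setLIntegral_congr_fun measurableSet_Ioi
  intro z hz
  have hz0 : (0:ℝ) < z := hz
  have hc : (0:ℝ) ≤ Real.exp (-z) / z := div_nonneg (Real.exp_pos _).le hz0.le
  -- split ofReal of products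
  have hsplit : ∀ ω, ENNReal.ofReal (Real.exp (-z) / z *
      Real.exp (-(z * Z ω)) * (1 - Real.exp (-(z * W ω)))) =
      ENNReal.ofReal (Real.exp (-z) / z) * (ENNReal.ofReal (Real.exp (-(z * Z ω))) *
        ENNReal.ofReal (1 - Real.exp (-(z * W ω)))) := by
    intro ω
    rw [ENNReal.ofReal_mul (mul_nonneg hc (Real.exp_pos _).le), ENNReal.ofReal_mul hc,
      mul_assoc]
  simp_rw [hsplit]
  rw [lintegral_const_mul _ (by
    exact (ENNReal.measurable_ofReal.comp
        (Real.continuous_exp.measurable.comp (measurable_const.mul hZ).neg)).mul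
      (ENNReal.measurable_ofReal.comp
        (measurable_const.sub (Real.continuous_exp.measurable.comp
          (measurable_const.mul hW).neg))))]
  have hindep : ProbabilityTheory.IndepFun
      (fun ω => ENNReal.ofReal (Real.exp (-(z * Z ω))))
      (fun ω => ENNReal.ofReal (1 - Real.exp (-(z * W ω)))) μ :=
    hInd.symm.comp
      (ENNReal.measurable_ofReal.comp
        (Real.continuous_exp.measurable.comp (measurable_const.mul measurable_id).neg))
      (ENNReal.measurable_ofReal.comp
        (measurable_const.sub (Real.continuous_exp.measurable.comp
          (measurable_const.mul measurable_id).neg)))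
  have hmul := ProbabilityTheory.lintegral_mul_eq_lintegral_mul_lintegral_of_indepFun
    (μ := μ)
    (f := fun ω => ENNReal.ofReal (Real.exp (-(z * Z ω))))
    (g := fun ω => ENNReal.ofReal (1 - Real.exp (-(z * W ω))))
    (ENNReal.measurable_ofReal.comp
      (Real.continuous_exp.measurable.comp (measurable_const.mul hZ).neg))
    (ENNReal.measurable_ofReal.comp
      (measurable_const.sub (Real.continuous_exp.measurable.comp
        (measurable_const.mul hW).neg))) hindep
  simp only [Pi.mul_apply] at hmul
  rw [hmul]
  -- convert lintegrals to Bochner integrals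
  have hZint : Integrable (fun ω => Real.exp (-(z * Z ω))) μ := aux_integrable μ hZ hZ0 hz0.le
  have hWint : Integrable (fun ω => Real.exp (-(z * W ω))) μ := aux_integrable μ hW hW0 hz0.le
  have hA : ∫⁻ ω, ENNReal.ofReal (Real.exp (-(z * Z ω))) ∂μ =
      ENNReal.ofReal (∫ ω, Real.exp (-(z * Z ω)) ∂μ) :=
    (ofReal_integral_eq_lintegral_ofReal hZint
      (Filter.Eventually.of_forall fun ω => (Real.exp_pos _).le)).symm
  have hWle : ∀ ω, Real.exp (-(z * W ω)) ≤ 1 := fun ω =>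
    Real.exp_le_one_iff.mpr (neg_nonpos.mpr (mul_nonneg hz0.le (hW0 ω)))
  have hB : ∫⁻ ω, ENNReal.ofReal (1 - Real.exp (-(z * W ω))) ∂μ =
      ENNReal.ofReal (1 - ∫ ω, Real.exp (-(z * W ω)) ∂μ) := by
    have hsub : Integrable (fun ω => 1 - Real.exp (-(z * W ω))) μ :=
      (integrable_const 1).sub hWint
    rw [← ofReal_integral_eq_lintegral_ofReal hsub
      (Filter.Eventually.of_forall fun ω => by simpa using hWle ω)]
    congr 1
    rw [integral_sub (integrable_const 1) hWint]
    simp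
  rw [hA, hB]
  have hAnn : 0 ≤ ∫ ω, Real.exp (-(z * Z ω)) ∂μ :=
    integral_nonneg fun ω => (Real.exp_pos _).le
  rw [← mul_assoc, ← ENNReal.ofReal_mul hc, ← ENNReal.ofReal_mul (mul_nonneg hc hAnn)]
end

section
/- Let M ≥ 1, let g, u ∈ ℂ^M (with the standard Hermitian inner product ⟨·,·⟩, conjugate-linear in the first argument, and norm ‖·‖), and let a ≥ 0 be a real number. Then the supremum over all unit vectors w ∈ ℂ^M of the quotient |⟨w, g⟩|² / (a·|⟨w, u⟩|² + 1) equals ‖g‖² − a·|⟨u, g⟩|² / (1 + a·‖u‖²). -/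
open scoped InnerProductSpace

set_option maxHeartbeats 1600000 in
/-- The supremum over unit vectors `w ∈ ℂ^M` of `|⟨w, g⟩|² / (a·|⟨w, u⟩|² + 1)` equals
`‖g‖² − a·|⟨u, g⟩|² / (1 + a·‖u‖²)`. -/
theorem sSup_beamformer_ratio
    (M : ℕ) (hM : 1 ≤ M) (g u : EuclideanSpace ℂ (Fin M)) (a : ℝ) (ha : 0 ≤ a) :
    sSup {r : ℝ | ∃ w : EuclideanSpace ℂ (Fin M), ‖w‖ = 1 ∧
        r = ‖⟪w, g⟫_ℂ‖ ^ 2 / (a * ‖⟪w, u⟫_ℂ‖ ^ 2 + 1)} =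
      ‖g‖ ^ 2 - a * ‖⟪u, g⟫_ℂ‖ ^ 2 / (1 + a * ‖u‖ ^ 2) := by
  have hu2 : ⟪u, u⟫_ℂ = ((‖u‖ ^ 2 : ℝ) : ℂ) := by
    rw [inner_self_eq_norm_sq_to_K]; norm_cast
  have hg2 : ⟪g, g⟫_ℂ = ((‖g‖ ^ 2 : ℝ) : ℂ) := by
    rw [inner_self_eq_norm_sq_to_K]; norm_cast
  set d : ℝ := 1 + a * ‖u‖ ^ 2 with hd_def
  have hd : 0 < d := by positivity
  set s : ℂ := ⟪u, g⟫_ℂ with hs_def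
  set V : ℝ := ‖g‖ ^ 2 - a * ‖s‖ ^ 2 / d with hV_def
  set c : ℂ := (a : ℂ) * s / (d : ℂ) with hc_def
  set v : EuclideanSpace ℂ (Fin M) := g - c • u with hv_def
  have hdC : (d : ℂ) ≠ 0 := by exact_mod_cast hd.ne'
  clear_value d s V c v
  have hdc : (d : ℂ) = 1 + (a : ℂ) * ((‖u‖ : ℝ) : ℂ) ^ 2 := by
    rw [hd_def]; push_cast; ring
  have hss : (starRingEnd ℂ) s * s = ((‖s‖ : ℝ) : ℂ) ^ 2 := RCLike.conj_mul s
  -- inner u v = s / d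
  have hvu : ⟪u, v⟫_ℂ = s / d := by
    rw [hv_def, inner_sub_right, inner_smul_right, hu2, ← hs_def, hc_def]
    field_simp
    push_cast
    linear_combination s * hdc
  -- inner v g = V
  have hcs : (starRingEnd ℂ) c * s = ((a * ‖s‖ ^ 2 / d : ℝ) : ℂ) := by
    rw [hc_def, map_div₀, map_mul]
    rw [Complex.conj_ofReal, Complex.conj_ofReal]
    push_cast
    field_simp
    push_cast
    linear_combination (a : ℂ) * hss
  have hvg : ⟪v, g⟫_ℂ = ((V : ℝ) : ℂ) := by
    rw [hv_def, inner_sub_left, hg2, inner_smul_left, ← hs_def, hcs, hV_def]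
    push_cast
    ring
  -- norm of v squared
  have hvv : (‖v‖ : ℝ) ^ 2 = V - a * ‖s‖ ^ 2 / d ^ 2 := by
    have h1 : ⟪v, v⟫_ℂ = ⟪v, g⟫_ℂ - c * ⟪v, u⟫_ℂ := by
      rw [hv_def, inner_sub_right, inner_smul_right]
    have h2 : ⟪v, u⟫_ℂ = (starRingEnd ℂ) (s / d) := by
      rw [← inner_conj_symm, hvu]
    have h3 : c * (starRingEnd ℂ) (s / d) = ((a * ‖s‖ ^ 2 / d ^ 2 : ℝ) : ℂ) := by
      have hss' : s * (starRingEnd ℂ) s = ((‖s‖ : ℝ) : ℂ) ^ 2 := RCLike.mul_conj s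
      rw [map_div₀, Complex.conj_ofReal, hc_def]
      push_cast
      rw [div_mul_div_comm, mul_assoc, hss']
      ring
    have h4 : ⟪v, v⟫_ℂ = ((V - a * ‖s‖ ^ 2 / d ^ 2 : ℝ) : ℂ) := by
      rw [h1, hvg, h2, h3]
      push_cast
      ring
    have h5 : ⟪v, v⟫_ℂ = (((‖v‖ ^ 2 : ℝ)) : ℂ) := by
      rw [inner_self_eq_norm_sq_to_K]; norm_cast
    have h6 := h5.symm.trans h4
    exact_mod_cast h6
  have huv : ‖⟪u, v⟫_ℂ‖ ^ 2 = ‖s‖ ^ 2 / d ^ 2 := by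
    rw [hvu, norm_div, Complex.norm_real, Real.norm_eq_abs, abs_of_pos hd, div_pow]
  have hVsum : V = ‖v‖ ^ 2 + a * ‖⟪u, v⟫_ℂ‖ ^ 2 := by
    rw [hvv, huv]; ring
  have hVnonneg : 0 ≤ V := by
    rw [hVsum]; positivity
  -- upper bound
  have hub : ∀ w : EuclideanSpace ℂ (Fin M), ‖w‖ = 1 →
      ‖⟪w, g⟫_ℂ‖ ^ 2 ≤ (a * ‖⟪w, u⟫_ℂ‖ ^ 2 + 1) * V := by
    intro w hw
    have hg : g = v + c • u := by rw [hv_def]; abel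
    have h1 : ⟪w, g⟫_ℂ = ⟪w, v⟫_ℂ + c * ⟪w, u⟫_ℂ := by
      conv_lhs => rw [hg]
      rw [inner_add_right, inner_smul_right]
    have hcnorm : ‖c‖ = a * ‖⟪u, v⟫_ℂ‖ := by
      rw [hc_def, hvu, norm_div, norm_div, norm_mul, Complex.norm_real, Complex.norm_real,
        Real.norm_eq_abs, Real.norm_eq_abs, abs_of_pos hd, abs_of_nonneg ha]
      field_simp
    have h2 : ‖⟪w, g⟫_ℂ‖ ≤ ‖v‖ + a * ‖⟪u, v⟫_ℂ‖ * ‖⟪w, u⟫_ℂ‖ := by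
      calc ‖⟪w, g⟫_ℂ‖ ≤ ‖⟪w, v⟫_ℂ‖ + ‖c * ⟪w, u⟫_ℂ‖ := by
            rw [h1]; exact norm_add_le _ _
        _ ≤ ‖v‖ + a * ‖⟪u, v⟫_ℂ‖ * ‖⟪w, u⟫_ℂ‖ := by
            rw [norm_mul, hcnorm]
            have := norm_inner_le_norm (𝕜 := ℂ) w v
            rw [hw, one_mul] at this
            linarith
    have h3 : ‖⟪w, g⟫_ℂ‖ ^ 2 ≤ (‖v‖ + a * ‖⟪u, v⟫_ℂ‖ * ‖⟪w, u⟫_ℂ‖) ^ 2 := by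
      have := norm_nonneg (⟪w, g⟫_ℂ)
      nlinarith
    rw [hVsum]
    set A := ‖v‖ with hA
    set B := ‖⟪u, v⟫_ℂ‖ with hB
    set T := ‖⟪w, u⟫_ℂ‖ with hT
    set G := ‖⟪w, g⟫_ℂ‖ with hG
    have hA0 : 0 ≤ A := norm_nonneg _
    have hB0 : 0 ≤ B := norm_nonneg _
    have hT0 : 0 ≤ T := norm_nonneg _
    clear_value A B T G
    clear h1 h2 hg hcnorm hvu hvg hcs hss hdc hdC hv_def hc_def hs_def hvv huv hVsum hu2 hg2
    nlinarith [mul_nonneg ha (sq_nonneg (B - T * A)), h3, sq_nonneg (B - T * A)]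
  -- membership
  have hmem : ∃ w : EuclideanSpace ℂ (Fin M), ‖w‖ = 1 ∧
      V = ‖⟪w, g⟫_ℂ‖ ^ 2 / (a * ‖⟪w, u⟫_ℂ‖ ^ 2 + 1) := by
    by_cases hg0 : g = 0
    · have hs0 : s = 0 := by rw [hs_def, hg0, inner_zero_right]
      have hV0 : V = 0 := by
        rw [hV_def, hg0, hs0]; simp
      refine ⟨EuclideanSpace.single ⟨0, hM⟩ (1 : ℂ), ?_, ?_⟩
      · rw [EuclideanSpace.norm_single]; simp
      · rw [hg0, inner_zero_right, hV0]; simp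
    · have hvne : v ≠ 0 := by
        intro h
        apply hg0
        have h0 : ⟪u, v⟫_ℂ = 0 := by rw [h, inner_zero_right]
        rw [hvu] at h0
        have hs0 : s = 0 := by
          field_simp at h0
          simpa using h0
        have hc0 : c = 0 := by rw [hc_def, hs0]; simp
        rw [hv_def, hc0, zero_smul, sub_zero] at h
        exact h
      have hnv : (0:ℝ) < ‖v‖ := norm_pos_iff.mpr hvne
      have hVpos : 0 < V := by
        rw [hVsum]
        have h1 : (0:ℝ) < ‖v‖ ^ 2 := by positivity
        have h2 : (0:ℝ) ≤ a * ‖⟪u, v⟫_ℂ‖ ^ 2 := by positivity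
        linarith
      refine ⟨((‖v‖⁻¹ : ℝ) : ℂ) • v, ?_, ?_⟩
      · rw [norm_smul, Complex.norm_real, Real.norm_eq_abs, abs_of_pos (by positivity)]
        field_simp
      · rw [inner_smul_left, inner_smul_left, hvg, Complex.conj_ofReal]
        have hvuN : ‖⟪v, u⟫_ℂ‖ = ‖⟪u, v⟫_ℂ‖ := norm_inner_symm v u
        rw [norm_mul, norm_mul, Complex.norm_real, Complex.norm_real, hvuN]
        rw [Real.norm_eq_abs V, abs_of_nonneg hVnonneg]
        simp only [norm_inv, norm_norm]
        have hden : a * (‖v‖⁻¹ * ‖⟪u, v⟫_ℂ‖) ^ 2 + 1 = V / ‖v‖ ^ 2 := by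
          rw [hVsum]
          field_simp
          ring
        rw [hden]
        rw [mul_pow, eq_div_iff (ne_of_gt (div_pos hVpos (by positivity)))]
        field_simp [hnv.ne']
  -- conclusion
  apply IsGreatest.csSup_eq
  constructor
  · exact hmem
  rintro r ⟨w, hw, rfl⟩
  have hden : (0:ℝ) < a * ‖⟪w, u⟫_ℂ‖ ^ 2 + 1 := by
    have h1 : (0:ℝ) ≤ a * ‖⟪w, u⟫_ℂ‖ ^ 2 := mul_nonneg ha (sq_nonneg _)
    linarith
  rw [div_le_iff₀ hden]
  calc ‖⟪w, g⟫_ℂ‖ ^ 2 ≤ (a * ‖⟪w, u⟫_ℂ‖ ^ 2 + 1) * V := hub w hw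
    _ = V * (a * ‖⟪w, u⟫_ℂ‖ ^ 2 + 1) := by ring
end

section
/- Let M ≥ 1, let g, u ∈ ℂ^M with g ≠ 0, and let a ≥ 0 be a real number. Let A be the M×M complex matrix A = I + a·u u†, where u u† denotes the rank-one outer product matrix sending x to ⟨u, x⟩·u (inner product conjugate-linear in the first argument). Then A is invertible, the vector w* = A⁻¹ g / ‖A⁻¹ g‖ is a well-defined unit vector, and w* attains the supremum of |⟨w, g⟩|² / (a·|⟨w, u⟩|² + 1) over all unit vectors w ∈ ℂ^M; that is, |⟨w*, g⟩|² / (a·|⟨w*, u⟩|² + 1) ≥ |⟨w, g⟩|² / (a·|⟨w, u⟩|² + 1) for every unit vector w. -/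
open scoped InnerProductSpace ComplexConjugate

private lemma mul_conj_self' (z : ℂ) : z * conj z = ((‖z‖^2 : ℝ) : ℂ) := by
  rw [Complex.mul_conj, Complex.normSq_eq_norm_sq]

private lemma smul_real_inner_left' {M : ℕ} (v w : EuclideanSpace ℂ (Fin M)) (r : ℝ) :
    ⟪r • v, w⟫_ℂ = (r:ℂ) * ⟪v, w⟫_ℂ := by
  have : (r • v : EuclideanSpace ℂ (Fin M)) = (r:ℂ) • v := by
    simp [Complex.real_smul]
  rw [this, inner_smul_left]; simp

private lemma inner_self' {M : ℕ} (v : EuclideanSpace ℂ (Fin M)) :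
    ⟪v, v⟫_ℂ = ((‖v‖^2 : ℝ) : ℂ) := by
  exact_mod_cast inner_self_eq_norm_sq_to_K (𝕜 := ℂ) v

set_option maxHeartbeats 1000000 in
/-- For `g ≠ 0`, `u ∈ ℂ^M` and `a ≥ 0`, the operator `A = I + a·u u†` is invertible,
`w* = A⁻¹ g / ‖A⁻¹ g‖` is a well-defined unit vector, and `w*` attains the supremum of
`|⟨w, g⟩|² / (a·|⟨w, u⟩|² + 1)` over all unit vectors `w`. -/
theorem optimal_receive_beamformer
    (M : ℕ) (hM : 1 ≤ M) (g u : EuclideanSpace ℂ (Fin M)) (hg : g ≠ 0)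
    (a : ℝ) (ha : 0 ≤ a)
    (A : EuclideanSpace ℂ (Fin M) →L[ℂ] EuclideanSpace ℂ (Fin M))
    (hA : ∀ x, A x = x + (a : ℂ) • (⟪u, x⟫_ℂ • u)) :
    IsUnit A ∧ Ring.inverse A g ≠ 0 ∧
      ‖(‖Ring.inverse A g‖)⁻¹ • Ring.inverse A g‖ = 1 ∧
      ∀ w : EuclideanSpace ℂ (Fin M), ‖w‖ = 1 →
        ‖⟪w, g⟫_ℂ‖ ^ 2 / (a * ‖⟪w, u⟫_ℂ‖ ^ 2 + 1) ≤
          ‖⟪(‖Ring.inverse A g‖)⁻¹ • Ring.inverse A g, g⟫_ℂ‖ ^ 2 /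
            (a * ‖⟪(‖Ring.inverse A g‖)⁻¹ • Ring.inverse A g, u⟫_ℂ‖ ^ 2 + 1) := by
  have hinnerA : ∀ x y : EuclideanSpace ℂ (Fin M),
      ⟪x, A y⟫_ℂ = ⟪x, y⟫_ℂ + (a:ℂ) * (⟪u, y⟫_ℂ * ⟪x, u⟫_ℂ) := by
    intro x y
    rw [hA y, inner_add_right, inner_smul_right, inner_smul_right]
  have hselfA : ∀ x : EuclideanSpace ℂ (Fin M),
      ⟪x, A x⟫_ℂ = ((‖x‖^2 + a * ‖⟪x, u⟫_ℂ‖^2 : ℝ) : ℂ) := by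
    intro x
    rw [hinnerA, inner_self']
    rw [← inner_conj_symm x u, mul_conj_self', RCLike.norm_conj]
    push_cast; ring
  have hinj : Function.Injective A := by
    intro x y hxy
    have hz : A (x - y) = 0 := by rw [map_sub, hxy, sub_self]
    by_contra hne
    have hzne : x - y ≠ 0 := sub_ne_zero.2 (fun h => hne h)
    have h0 : ⟪x - y, A (x - y)⟫_ℂ = 0 := by rw [hz, inner_zero_right]
    rw [hselfA] at h0
    have h0' : (‖x - y‖^2 + a * ‖⟪x - y, u⟫_ℂ‖^2 : ℝ) = 0 := by exact_mod_cast h0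
    have hn : 0 < ‖x - y‖^2 := pow_pos (norm_pos_iff.mpr hzne) 2
    nlinarith [mul_nonneg ha (sq_nonneg ‖⟪x - y, u⟫_ℂ‖)]
  have hinj' : Function.Injective A.toLinearMap := hinj
  let e : EuclideanSpace ℂ (Fin M) ≃ₗ[ℂ] EuclideanSpace ℂ (Fin M) :=
    LinearEquiv.ofInjectiveEndo A.toLinearMap hinj'
  have hecoe : ⇑e = ⇑A := LinearEquiv.coe_ofInjectiveEndo A.toLinearMap hinj'
  let ce := e.toContinuousLinearEquiv
  have hcecoe : ⇑ce = ⇑A := by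
    rw [LinearEquiv.coe_toContinuousLinearEquiv']; exact hecoe
  have hU : IsUnit A := by
    refine ⟨⟨A, ce.symm.toContinuousLinearMap, ?_, ?_⟩, rfl⟩
    · refine ContinuousLinearMap.ext fun x => ?_
      simp only [ContinuousLinearMap.mul_apply, ContinuousLinearMap.one_apply,
        ContinuousLinearEquiv.coe_coe]
      rw [← hcecoe]; exact ce.apply_symm_apply x
    · refine ContinuousLinearMap.ext fun x => ?_
      simp only [ContinuousLinearMap.mul_apply, ContinuousLinearMap.one_apply,
        ContinuousLinearEquiv.coe_coe]
      rw [← hcecoe]; exact ce.symm_apply_apply x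
  set v := Ring.inverse A g with hvdef
  have hAv : A v = g := by
    have h1 : A * Ring.inverse A = 1 := Ring.mul_inverse_cancel A hU
    calc A v = (A * Ring.inverse A) g := rfl
    _ = g := by rw [h1]; rfl
  have hv0 : v ≠ 0 := by
    intro h
    apply hg
    rw [← hAv, h, map_zero]
  have hnv : 0 < ‖v‖ := norm_pos_iff.2 hv0
  set t := ‖⟪v, u⟫_ℂ‖ with htdef
  have ht : 0 ≤ t := norm_nonneg _
  set c := ‖v‖^2 + a * t^2 with hcdef
  have hcpos : 0 < c := by positivity
  have hvg : ⟪v, g⟫_ℂ = (c : ℂ) := by rw [← hAv, hselfA]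
  have hnorm1 : ‖(‖v‖)⁻¹ • v‖ = 1 := by
    rw [norm_smul]
    simp [abs_of_pos hnv, inv_mul_cancel₀ (ne_of_gt hnv)]
  refine ⟨hU, hv0, hnorm1, ?_⟩
  intro w hw
  have hninv : ‖((‖v‖⁻¹ : ℝ) : ℂ)‖ = ‖v‖⁻¹ := by
    rw [Complex.norm_real, Real.norm_eq_abs, abs_of_pos (inv_pos.2 hnv)]
  have hrg : ‖⟪(‖v‖)⁻¹ • v, g⟫_ℂ‖ = ‖v‖⁻¹ * c := by
    rw [smul_real_inner_left', hvg, norm_mul, hninv, Complex.norm_real,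
      Real.norm_eq_abs, abs_of_pos hcpos]
  have hru : ‖⟪(‖v‖)⁻¹ • v, u⟫_ℂ‖ = ‖v‖⁻¹ * t := by
    rw [smul_real_inner_left', norm_mul, hninv, ← htdef]
  rw [hrg, hru]
  have hRHS : (‖v‖⁻¹ * c) ^ 2 / (a * (‖v‖⁻¹ * t) ^ 2 + 1) = c := by
    have h1 : a * (‖v‖⁻¹ * t) ^ 2 + 1 = c / ‖v‖^2 := by
      field_simp
      rw [hcdef]; ring
    rw [h1]
    field_simp
  rw [hRHS]
  have hd : 0 < a * ‖⟪w, u⟫_ℂ‖ ^ 2 + 1 := by positivity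
  rw [div_le_iff₀ hd]
  set p := ‖⟪w, v⟫_ℂ‖ with hpdef
  set s := ‖⟪w, u⟫_ℂ‖ with hsdef
  have hp : p ≤ ‖v‖ := by
    have h2 := norm_inner_le_norm (𝕜 := ℂ) w v
    rwa [hw, one_mul] at h2
  have hs : 0 ≤ s := norm_nonneg _
  have hp0 : 0 ≤ p := norm_nonneg _
  have htuv : ‖⟪u, v⟫_ℂ‖ = t := by
    rw [htdef, ← inner_conj_symm v u, RCLike.norm_conj]
  have hwg : ‖⟪w, g⟫_ℂ‖ ≤ p + a * t * s := by
    rw [← hAv, hinnerA]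
    calc ‖⟪w, v⟫_ℂ + (a:ℂ) * (⟪u, v⟫_ℂ * ⟪w, u⟫_ℂ)‖
        ≤ ‖⟪w, v⟫_ℂ‖ + ‖(a:ℂ) * (⟪u, v⟫_ℂ * ⟪w, u⟫_ℂ)‖ := norm_add_le _ _
      _ = p + a * (t * s) := by
          rw [norm_mul, norm_mul, Complex.norm_real, Real.norm_eq_abs,
            abs_of_nonneg ha, htuv, ← hpdef, ← hsdef]
      _ = p + a * t * s := by ring
  have hwg0 : 0 ≤ ‖⟪w, g⟫_ℂ‖ := norm_nonneg _
  have key : (p + a * t * s)^2 ≤ c * (a * s^2 + 1) := by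
    rw [hcdef]
    nlinarith [sq_nonneg (‖v‖ * s - t), mul_nonneg (mul_nonneg ha ht)
      (mul_nonneg hs (sub_nonneg.2 hp)), mul_nonneg ha (sq_nonneg (‖v‖ * s - t))]
  calc ‖⟪w, g⟫_ℂ‖ ^ 2 ≤ (p + a * t * s)^2 := pow_le_pow_left₀ hwg0 hwg 2
    _ ≤ c * (a * s^2 + 1) := key
end

section
/- Let M ≥ 1, let h, g ∈ ℂ^M, let H be an M×M complex matrix, let a₁, a₂, a₃ ≥ 0 be real numbers, and let w_t ∈ ℂ^M be a unit vector. Then the supremum over all unit vectors w_r ∈ ℂ^M of ln(1 + a₁·|⟨w_t, h⟩|²) + ln(1 + a₂·|⟨w_r, g⟩|² / (a₃·|⟨w_r, H w_t⟩|² + 1)) equals ln(1 + a₁·|⟨w_t, h⟩|²) + ln(1 + a₂·(‖g‖² − a₃·|⟨H w_t, g⟩|² / (1 + a₃·‖H w_t‖²))). -/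
open scoped InnerProductSpace

private lemma inner_self_complex {E : Type*} [NormedAddCommGroup E] [InnerProductSpace ℂ E]
    (x : E) : ⟪x, x⟫_ℂ = ((‖x‖ : ℝ) : ℂ) ^ 2 := by
  have h1 := inner_self_eq_norm_sq_to_K (𝕜 := ℂ) x
  simpa [RCLike.ofReal_alg, Complex.real_smul] using h1

/-- Reduction of the joint beamformer sum-rate maximization: for a fixed unit-norm transmit
beamformer `w_t`, the supremum over unit-norm receive beamformers `w_r` of
`ln(1 + a₁|⟨w_t,h⟩|²) + ln(1 + a₂|⟨w_r,g⟩|²/(a₃|⟨w_r,H w_t⟩|² + 1))` equals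
`ln(1 + a₁|⟨w_t,h⟩|²) + ln(1 + a₂(‖g‖² − a₃|⟨H w_t,g⟩|²/(1 + a₃‖H w_t‖²)))`. -/
theorem sum_rate_receive_beamformer_reduction
    (M : ℕ) (hM : 1 ≤ M) (h g : EuclideanSpace ℂ (Fin M))
    (H : Matrix (Fin M) (Fin M) ℂ)
    (a₁ a₂ a₃ : ℝ) (ha₁ : 0 ≤ a₁) (ha₂ : 0 ≤ a₂) (ha₃ : 0 ≤ a₃)
    (wt : EuclideanSpace ℂ (Fin M)) (hwt : ‖wt‖ = 1) :
    sSup {r : ℝ | ∃ wr : EuclideanSpace ℂ (Fin M), ‖wr‖ = 1 ∧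
        r = Real.log (1 + a₁ * ‖⟪wt, h⟫_ℂ‖ ^ 2) +
          Real.log (1 + a₂ * ‖⟪wr, g⟫_ℂ‖ ^ 2 /
            (a₃ * ‖⟪wr, Matrix.toEuclideanLin H wt⟫_ℂ‖ ^ 2 + 1))} =
      Real.log (1 + a₁ * ‖⟪wt, h⟫_ℂ‖ ^ 2) +
        Real.log (1 + a₂ * (‖g‖ ^ 2 -
          a₃ * ‖⟪Matrix.toEuclideanLin H wt, g⟫_ℂ‖ ^ 2 /
            (1 + a₃ * ‖Matrix.toEuclideanLin H wt‖ ^ 2))) := by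
  classical
  set v : EuclideanSpace ℂ (Fin M) := Matrix.toEuclideanLin H wt with hv
  set D : ℝ := 1 + a₃ * ‖v‖ ^ 2 with hD
  have hD0 : 0 < D := by positivity
  have hDC : (D : ℂ) ≠ 0 := by exact_mod_cast hD0.ne'
  set c : ℂ := (a₃ : ℂ) * ⟪v, g⟫_ℂ / (D : ℂ) with hc
  set u : EuclideanSpace ℂ (Fin M) := g - c • v with hu
  set S : ℝ := ‖g‖ ^ 2 - a₃ * ‖⟪v, g⟫_ℂ‖ ^ 2 / D with hSdef
  have hDCeq : (D : ℂ) = 1 + (a₃ : ℂ) * (‖v‖ : ℂ) ^ 2 := by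
    rw [hD]; push_cast; ring
  have hvu : ⟪v, u⟫_ℂ = ⟪v, g⟫_ℂ / (D : ℂ) := by
    rw [hu, inner_sub_right, inner_smul_right, inner_self_complex, hc]
    field_simp
    rw [hDCeq]; ring
  have hc2 : (a₃ : ℂ) * ⟪v, u⟫_ℂ = c := by
    rw [hvu, hc]; ring
  have hAu : u + c • v = g := by rw [hu]; abel
  have hug : ⟪u, g⟫_ℂ = (S : ℂ) := by
    rw [hu, inner_sub_left, inner_smul_left, inner_self_complex, hc,
      map_div₀, map_mul]
    simp only [Complex.conj_ofReal]
    rw [hSdef]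
    push_cast
    have hz : (starRingEnd ℂ) ⟪v, g⟫_ℂ * ⟪v, g⟫_ℂ = ((‖⟪v, g⟫_ℂ‖ : ℂ)) ^ 2 :=
      Complex.conj_mul' _
    linear_combination (-(a₃ : ℂ) / (D : ℂ)) * hz
  -- the isometric-type embedding realizing the modified inner product
  set φ : EuclideanSpace ℂ (Fin M) → WithLp 2 ((EuclideanSpace ℂ (Fin M)) × ℂ) :=
    fun x => (WithLp.equiv 2 _).symm (x, ((Real.sqrt a₃ : ℝ) : ℂ) * ⟪v, x⟫_ℂ) with hφ
  have hφinner : ∀ x y, ⟪φ x, φ y⟫_ℂ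
      = ⟪x, y⟫_ℂ + (a₃ : ℂ) * ((starRingEnd ℂ) ⟪v, x⟫_ℂ * ⟪v, y⟫_ℂ) := by
    intro x y
    have hsq : ((Real.sqrt a₃ : ℝ) : ℂ) * ((Real.sqrt a₃ : ℝ) : ℂ) = (a₃ : ℂ) := by
      rw [← Complex.ofReal_mul, Real.mul_self_sqrt ha₃]
    simp only [hφ, WithLp.prod_inner_apply, WithLp.equiv_symm_apply, WithLp.ofLp_toLp,
      RCLike.inner_apply, map_mul, Complex.conj_ofReal]
    linear_combination ((starRingEnd ℂ) ⟪v, x⟫_ℂ * ⟪v, y⟫_ℂ) * hsq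
  have hφg : ∀ x, ⟪φ x, φ u⟫_ℂ = ⟪x, g⟫_ℂ := by
    intro x
    rw [hφinner, ← hAu, inner_add_right, inner_smul_right, ← inner_conj_symm x v]
    linear_combination (starRingEnd ℂ) ⟪v, x⟫_ℂ * hc2
  have hφnormsq : ∀ x, ‖φ x‖ ^ 2 = ‖x‖ ^ 2 + a₃ * ‖⟪v, x⟫_ℂ‖ ^ 2 := by
    intro x
    have h1 : ⟪φ x, φ x⟫_ℂ = ((‖φ x‖ : ℝ) : ℂ) ^ 2 := inner_self_complex _
    rw [hφinner, inner_self_complex, Complex.conj_mul'] at h1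
    exact_mod_cast h1.symm
  have hSu : S = ‖u‖ ^ 2 + a₃ * ‖⟪v, u⟫_ℂ‖ ^ 2 := by
    have h1 : ⟪φ u, φ u⟫_ℂ = (S : ℂ) := by rw [hφg u, hug]
    have h2 : ⟪φ u, φ u⟫_ℂ = ((‖φ u‖ : ℝ) : ℂ) ^ 2 := inner_self_complex _
    have h3 : S = ‖φ u‖ ^ 2 := by exact_mod_cast (h1.symm.trans h2)
    rw [h3, hφnormsq u]
  have hS0 : 0 ≤ S := by rw [hSu]; positivity
  have hub : ∀ wr : EuclideanSpace ℂ (Fin M), ‖wr‖ = 1 →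
      ‖⟪wr, g⟫_ℂ‖ ^ 2 ≤ S * (a₃ * ‖⟪wr, v⟫_ℂ‖ ^ 2 + 1) := by
    intro wr hwr
    have h1 : ‖⟪φ wr, φ u⟫_ℂ‖ ≤ ‖φ wr‖ * ‖φ u‖ := norm_inner_le_norm _ _
    have h2 : ‖⟪φ wr, φ u⟫_ℂ‖ ^ 2 ≤ (‖φ wr‖ * ‖φ u‖) ^ 2 :=
      pow_le_pow_left₀ (norm_nonneg _) h1 2
    rw [hφg wr, mul_pow, hφnormsq wr, hφnormsq u, hwr, ← hSu] at h2
    calc ‖⟪wr, g⟫_ℂ‖ ^ 2 ≤ (1 ^ 2 + a₃ * ‖⟪v, wr⟫_ℂ‖ ^ 2) * S := h2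
      _ = S * (a₃ * ‖⟪wr, v⟫_ℂ‖ ^ 2 + 1) := by rw [norm_inner_symm wr v]; ring
  -- the witness achieving the bound
  have hwitness : ∃ wr : EuclideanSpace ℂ (Fin M), ‖wr‖ = 1 ∧
      a₂ * ‖⟪wr, g⟫_ℂ‖ ^ 2 / (a₃ * ‖⟪wr, v⟫_ℂ‖ ^ 2 + 1) = a₂ * S := by
    by_cases hg : g = 0
    · refine ⟨EuclideanSpace.single ⟨0, hM⟩ 1, by simp [EuclideanSpace.norm_single], ?_⟩
      have hS0' : S = 0 := by rw [hSdef, hg]; simp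
      simp [hg, hS0']
    · have hune : u ≠ 0 := by
        intro h0
        apply hg
        have hc0 : c = 0 := by rw [← hc2, h0, inner_zero_right, mul_zero]
        rw [← hAu, h0, hc0, zero_smul, add_zero]
      have hn : (0 : ℝ) < ‖u‖ := norm_pos_iff.mpr hune
      have hSpos : 0 < S := by
        rw [hSu]
        nlinarith [mul_nonneg ha₃ (sq_nonneg ‖⟪v, u⟫_ℂ‖), pow_pos hn 2]
      refine ⟨((‖u‖⁻¹ : ℝ) : ℂ) • u, ?_, ?_⟩
      · rw [norm_smul]
        simp [hn.ne']
      · rw [inner_smul_left, inner_smul_left, hug]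
        simp only [Complex.conj_ofReal]
        rw [norm_mul, norm_mul, Complex.norm_real, Complex.norm_real,
          Real.norm_eq_abs, Real.norm_eq_abs, abs_of_nonneg (inv_nonneg.mpr hn.le),
          abs_of_nonneg hS0, norm_inner_symm u v]
        set n : ℝ := ‖u‖ with hn'
        set t : ℝ := ‖⟪v, u⟫_ℂ‖ with ht'
        have hden : a₃ * (n⁻¹ * t) ^ 2 + 1 = S / n ^ 2 := by
          rw [eq_div_iff (by positivity : (n : ℝ) ^ 2 ≠ 0), hSu]
          field_simp
          ring
        rw [hden]
        rw [div_div_eq_mul_div, div_eq_iff hSpos.ne']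
        field_simp
  obtain ⟨wr₀, hwr₀, hval₀⟩ := hwitness
  have hmem : (Real.log (1 + a₁ * ‖⟪wt, h⟫_ℂ‖ ^ 2) + Real.log (1 + a₂ * S)) ∈
      {r : ℝ | ∃ wr : EuclideanSpace ℂ (Fin M), ‖wr‖ = 1 ∧
        r = Real.log (1 + a₁ * ‖⟪wt, h⟫_ℂ‖ ^ 2) +
          Real.log (1 + a₂ * ‖⟪wr, g⟫_ℂ‖ ^ 2 / (a₃ * ‖⟪wr, v⟫_ℂ‖ ^ 2 + 1))} :=
    ⟨wr₀, hwr₀, by rw [hval₀]⟩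
  have hubset : ∀ r ∈ {r : ℝ | ∃ wr : EuclideanSpace ℂ (Fin M), ‖wr‖ = 1 ∧
      r = Real.log (1 + a₁ * ‖⟪wt, h⟫_ℂ‖ ^ 2) +
        Real.log (1 + a₂ * ‖⟪wr, g⟫_ℂ‖ ^ 2 / (a₃ * ‖⟪wr, v⟫_ℂ‖ ^ 2 + 1))},
      r ≤ Real.log (1 + a₁ * ‖⟪wt, h⟫_ℂ‖ ^ 2) + Real.log (1 + a₂ * S) := by
    rintro r ⟨wr, hwr, rfl⟩
    have hden : (0 : ℝ) < a₃ * ‖⟪wr, v⟫_ℂ‖ ^ 2 + 1 := by positivity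
    have hfrac : a₂ * ‖⟪wr, g⟫_ℂ‖ ^ 2 / (a₃ * ‖⟪wr, v⟫_ℂ‖ ^ 2 + 1) ≤ a₂ * S := by
      rw [div_le_iff₀ hden]
      have h1 := hub wr hwr
      calc a₂ * ‖⟪wr, g⟫_ℂ‖ ^ 2 ≤ a₂ * (S * (a₃ * ‖⟪wr, v⟫_ℂ‖ ^ 2 + 1)) :=
            mul_le_mul_of_nonneg_left h1 ha₂
        _ = a₂ * S * (a₃ * ‖⟪wr, v⟫_ℂ‖ ^ 2 + 1) := by ring
    have harg : (0 : ℝ) < 1 + a₂ * ‖⟪wr, g⟫_ℂ‖ ^ 2 / (a₃ * ‖⟪wr, v⟫_ℂ‖ ^ 2 + 1) := by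
      positivity
    have hle : 1 + a₂ * ‖⟪wr, g⟫_ℂ‖ ^ 2 / (a₃ * ‖⟪wr, v⟫_ℂ‖ ^ 2 + 1) ≤ 1 + a₂ * S := by
      linarith
    have hlog := Real.log_le_log harg hle
    linarith
  exact le_antisymm (csSup_le ⟨_, hmem⟩ hubset) (le_csSup ⟨_, hubset⟩ hmem)
end
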